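/- Let (g, φ) be a gauge transformation between Γ-connections (A,B) and (A',B') on M, i.e. A' = Ad_g A − g*θ̄ − 𝔩_1(φ) and B' = (Φ_g)_* B − dφ + (1/2)𝔩_2(𝔩_1(φ),φ) − 𝔩_2(Ad_g A, φ) + 𝔩_2(g*θ̄, φ). Then the fake curvature transforms by the adjoint action: fcurv(A',B') = Ad_g fcurv(A,B). -/
import Mathlib


/-- under a gauge transformation `(g, φ)` between `Γ`-connections `(A,B)` and
`(A',B')`, the fake curvature transforms by the adjoint action:
`fcurv(A',B') = Ad_g fcurv(A,B)`.  Here `AdA` models `Ad_g`, `Φg` models `(Φ_g)_*`,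
`θg` models the pullback `g*θ̄` of the Maurer–Cartan form, and `φ ∈ Ω¹(M,𝔥₁)`. -/
theorem gauge_transformation_fake_curvature
    (V H0 H1 : Type) [LieRing V] [Module ℝ V]
    [AddCommGroup H0] [Module ℝ H0] [AddCommGroup H1] [Module ℝ H1]
    (L0 : V → H0 →ₗ[ℝ] H0) (L1 : V → H1 →ₗ[ℝ] H1)
    (hL0 : ∀ (X Y : V) (a : H0), L0 ⁅X, Y⁆ a = L0 X (L0 Y a) - L0 Y (L0 X a))
    (hL1 : ∀ (X Y : V) (m : H1), L1 ⁅X, Y⁆ m = L1 X (L1 Y m) - L1 Y (L1 X m))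
    (l1 : H1 →ₗ[ℝ] H0) (l2 : H0 →ₗ[ℝ] H0 →ₗ[ℝ] H0) (l2m : H0 →ₗ[ℝ] H1 →ₗ[ℝ] H1)
    (hl2skew : ∀ a b : H0, l2 a b = - l2 b a)
    (hchain1 : ∀ (a : H0) (m : H1), l1 (l2m a m) = l2 a (l1 m))
    (hchain2 : ∀ m p : H1, l2m (l1 m) p = - l2m (l1 p) m)
    (hjac0 : ∀ a b c : H0, l2 a (l2 b c) = l2 (l2 a b) c + l2 b (l2 a c))
    (hjacm : ∀ (a b : H0) (m : H1), l2m a (l2m b m) = l2m (l2 a b) m + l2m b (l2m a m))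
    (hder0 : ∀ (X : V) (a b : H0), L0 X (l2 a b) = l2 (L0 X a) b + l2 a (L0 X b))
    (hder1 : ∀ (X : V) (a : H0) (m : H1), L1 X (l2m a m) = l2m (L0 X a) m + l2m a (L1 X m))
    (hcomm : ∀ (X : V) (m : H1), L0 X (l1 m) = l1 (L1 X m))
    -- the Γ-connection (A,B) and the gauge transformation data (g, φ)
    (A : V →ₗ[ℝ] H0) (B : V →ₗ[ℝ] V →ₗ[ℝ] H1)
    (hBskew : ∀ X Y : V, B X Y = - B Y X)
    (AdA : H0 →ₗ[ℝ] H0) (Φg : H1 →ₗ[ℝ] H1) (θg : V →ₗ[ℝ] H0) (φ : V →ₗ[ℝ] H1)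
    -- Maurer–Cartan equation for the (pulled back) Maurer–Cartan form
    (hMC : ∀ X Y : V, L0 X (θg Y) - L0 Y (θg X) - θg ⁅X, Y⁆ = l2 (θg X) (θg Y))
    -- d(Ad_g a) = Ad_g (d a) + 𝔩₂(g*θ̄, Ad_g a)
    (hdAd : ∀ (X : V) (a : H0), L0 X (AdA a) = AdA (L0 X a) + l2 (θg X) (AdA a))
    -- Ad_g is a Lie algebra morphism
    (hAdhom : ∀ a b : H0, AdA (l2 a b) = l2 (AdA a) (AdA b))
    -- equivariance 𝔩₁ ∘ (Φ_g)_* = Ad_g ∘ 𝔩₁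
    (hequiv : ∀ m : H1, l1 (Φg m) = AdA (l1 m))
    -- (Φ_g)_* 𝔩₂(ξ, η) = 𝔩₂(Ad_g ξ, (Φ_g)_* η)
    (hΦl2 : ∀ (a : H0) (m : H1), Φg (l2m a m) = l2m (AdA a) (Φg m))
    -- the gauge transformed connection (A', B')
    (A' : V → H0)
    (hA' : ∀ X : V, A' X = AdA (A X) - θg X - l1 (φ X))
    (B' : V → V → H1)
    (hB' : ∀ X Y : V, B' X Y =
      Φg (B X Y) - (L1 X (φ Y) - L1 Y (φ X) - φ ⁅X, Y⁆)
        + l2m (l1 (φ X)) (φ Y)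
        - (l2m (AdA (A X)) (φ Y) - l2m (AdA (A Y)) (φ X))
        + (l2m (θg X) (φ Y) - l2m (θg Y) (φ X)))
    -- the fake curvatures
    (Fc : V → V → H0)
    (hFc : ∀ X Y : V, Fc X Y =
      L0 X (A Y) - L0 Y (A X) - A ⁅X, Y⁆ + l2 (A X) (A Y) - l1 (B X Y))
    (Fc' : V → V → H0)
    (hFc' : ∀ X Y : V, Fc' X Y =
      L0 X (A' Y) - L0 Y (A' X) - A' ⁅X, Y⁆ + l2 (A' X) (A' Y) - l1 (B' X Y)) :
    ∀ X Y : V, Fc' X Y = AdA (Fc X Y) := by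
  intro X Y
  have hθ : θg ⁅X, Y⁆ = L0 X (θg Y) - L0 Y (θg X) - l2 (θg X) (θg Y) := by
    rw [← hMC X Y]; abel
  rw [hFc', hFc, hB' X Y, hA' X, hA' Y, hA' ⁅X, Y⁆, hθ]
  simp only [map_sub, map_add, map_neg, LinearMap.sub_apply, LinearMap.add_apply,
    LinearMap.neg_apply, hdAd, hcomm, hchain1, hequiv, hAdhom]
  rw [hl2skew (θg Y) (AdA (A X)), hl2skew (l1 (φ X)) (AdA (A Y)),
      hl2skew (l1 (φ X)) (θg Y)]
  abel
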